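/- Let g = h ⊕ m be a reductive decomposition of a finite-dimensional real Lie algebra g, and let F be a Minkowski norm on m that is both cyclic and naturally reductive with respect to this decomposition. Then [m,m] ⊆ h, i.e. the decomposition is a Cartan decomposition (the corresponding homogeneous Finsler manifold is a symmetric space). -/

import Mathlib

noncomputable section

/-- The fundamental tensor `g_y(u,v) = (1/2)·∂²/∂s∂t|_{s=t=0} F(y+su+tv)²`. -/
def gTensor {V : Type*} [NormedAddCommGroup V] [NormedSpace ℝ V]
    (F : V → ℝ) (y u v : V) : ℝ :=
  (1 / 2) * deriv (fun s : ℝ => deriv (fun t : ℝ => (F (y + s • u + t • v)) ^ 2) 0) 0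

/-- The Cartan tensor `C_y(u,v,w) = (1/2)·d/dt|_{t=0} g_{y+tw}(u,v)`. -/
def cartanTensor {V : Type*} [NormedAddCommGroup V] [NormedSpace ℝ V]
    (F : V → ℝ) (y u v w : V) : ℝ :=
  (1 / 2) * deriv (fun t : ℝ => gTensor F (y + t • w) u v) 0

/-- `F` is a Minkowski norm: positive and smooth away from `0`, positively
homogeneous of degree one, with positive-definite symmetric bilinear fundamental tensor. -/
structure IsMinkowskiNorm {V : Type*} [NormedAddCommGroup V] [NormedSpace ℝ V]
    (F : V → ℝ) : Prop where
  pos : ∀ y : V, y ≠ 0 → 0 < F y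
  smooth : ContDiffOn ℝ (⊤ : ℕ∞) F {(0 : V)}ᶜ
  homog : ∀ c : ℝ, 0 < c → ∀ y : V, F (c • y) = c * F y
  g_symm : ∀ y : V, y ≠ 0 → ∀ u v : V, gTensor F y u v = gTensor F y v u
  g_add_left : ∀ y : V, y ≠ 0 → ∀ u u' v : V,
    gTensor F y (u + u') v = gTensor F y u v + gTensor F y u' v
  g_smul_left : ∀ y : V, y ≠ 0 → ∀ (c : ℝ) (u v : V),
    gTensor F y (c • u) v = c * gTensor F y u v
  g_posdef : ∀ y : V, y ≠ 0 → ∀ u : V, u ≠ 0 → 0 < gTensor F y u u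

/-- A Lie algebra structure on the real vector space `V`, given as a bilinear map. -/
structure IsLieBracket {V : Type*} [AddCommGroup V] [Module ℝ V]
    (L : V →ₗ[ℝ] V →ₗ[ℝ] V) : Prop where
  alternate : ∀ x : V, L x x = 0
  jacobi : ∀ x y z : V, L x (L y z) = L (L x y) z + L y (L x z)

/-- The cyclic condition for a Minkowski norm on a Lie algebra. -/
def IsCyclicNorm {V : Type*} [NormedAddCommGroup V] [NormedSpace ℝ V]
    (L : V →ₗ[ℝ] V →ₗ[ℝ] V) (F : V → ℝ) : Prop :=
  ∀ y : V, y ≠ 0 → ∀ x z : V,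
    gTensor F y (L x y) z + gTensor F y (L y z) x + gTensor F y (L z x) y = 0

/-- The Riemann curvature `R_y(u) = D_η N(y,u) − N(y,N(y,u)) + N(y,[y,u]) − [y,N(y,u)]`. -/
def RiemannCurv {V : Type*} [NormedAddCommGroup V] [NormedSpace ℝ V]
    (L : V →ₗ[ℝ] V →ₗ[ℝ] V) (η : V → V) (N : V → V → V) (y u : V) : V :=
  fderiv ℝ (fun z => N z u) y (η y) - N y (N y u) + N y (L y u) - L y (N y u)

/-- Projection onto `m` along `h` in the decomposition `g = h ⊕ m`. -/
def projTo {V : Type*} [AddCommGroup V] [Module ℝ V] (h m : Submodule ℝ V)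
    (hcompl : IsCompl h m) : V →ₗ[ℝ] m :=
  m.linearProjOfIsCompl h hcompl.symm

/-- The inner product making the basis `e` orthonormal. -/
def basisInner {V : Type*} [AddCommGroup V] [Module ℝ V] {ι : Type*} [Fintype ι]
    (e : Module.Basis ι ℝ V) (x y : V) : ℝ :=
  ∑ k, e.repr x k * e.repr y k



lemma deriv_comp_mul (f : ℝ → ℝ) {c : ℝ} (hc : c ≠ 0) (x : ℝ) :
    deriv (fun t => f (c * t)) x = c * deriv f (c * x) := by
  by_cases hf : DifferentiableAt ℝ f (c * x)
  · have h1 : HasDerivAt (fun t : ℝ => c * t) c x := by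
      simpa using (hasDerivAt_id x).const_mul c
    have h2 := hf.hasDerivAt.comp x h1
    have h3 : deriv (fun t => f (c * t)) x = deriv f (c * x) * c := h2.deriv
    rw [h3]; ring
  · rw [deriv_zero_of_not_differentiableAt hf, mul_zero,
      deriv_zero_of_not_differentiableAt]
    intro hcontra
    apply hf
    have hinner : DifferentiableAt ℝ (fun t : ℝ => c⁻¹ * t) (c * x) :=
      (differentiable_id.const_mul _).differentiableAt
    have hd : DifferentiableAt ℝ ((fun t => f (c * t)) ∘ (fun t : ℝ => c⁻¹ * t)) (c * x) := by
      apply DifferentiableAt.comp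
      · show DifferentiableAt ℝ (fun t => f (c * t)) (c⁻¹ * (c * x))
        rw [inv_mul_cancel_left₀ hc]
        exact hcontra
      · exact hinner
    have heq : ((fun t => f (c * t)) ∘ (fun t : ℝ => c⁻¹ * t)) = f := by
      funext t; simp [Function.comp, mul_inv_cancel_left₀ hc]
    rwa [heq] at hd

lemma gTensor_homog {V : Type*} [NormedAddCommGroup V] [NormedSpace ℝ V]
    (F : V → ℝ) (homog : ∀ c : ℝ, 0 < c → ∀ y : V, F (c • y) = c * F y)
    {c : ℝ} (hc : 0 < c) (y u v : V) :
    gTensor F (c • y) u v = gTensor F y u v := by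
  have hc' : c ≠ 0 := hc.ne'
  have hD : ∀ s : ℝ, deriv (fun t : ℝ => F (c • y + s • u + t • v) ^ 2) 0
      = c * deriv (fun r : ℝ => F (y + (c⁻¹ * s) • u + r • v) ^ 2) 0 := by
    intro s
    have heq : (fun t : ℝ => F (c • y + s • u + t • v) ^ 2)
        = fun t : ℝ => c ^ 2 * ((fun r : ℝ => F (y + (c⁻¹ * s) • u + r • v) ^ 2) (c⁻¹ * t)) := by
      funext t
      have hv : c • y + s • u + t • v = c • (y + (c⁻¹ * s) • u + (c⁻¹ * t) • v) := by
        rw [smul_add, smul_add, smul_smul, smul_smul, mul_inv_cancel_left₀ hc',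
          mul_inv_cancel_left₀ hc']
      rw [hv, homog c hc]
      ring
    rw [heq, deriv_const_mul_field,
      deriv_comp_mul (fun r : ℝ => F (y + (c⁻¹ * s) • u + r • v) ^ 2) (inv_ne_zero hc') 0,
      mul_zero]
    field_simp
  unfold gTensor
  rw [funext hD, deriv_const_mul_field,
    deriv_comp_mul (fun σ : ℝ => deriv (fun r : ℝ => F (y + σ • u + r • v) ^ 2) 0)
      (inv_ne_zero hc') 0, mul_zero]
  field_simp

lemma deriv_gTensor_ray {V : Type*} [NormedAddCommGroup V] [NormedSpace ℝ V]
    (F : V → ℝ) (homog : ∀ c : ℝ, 0 < c → ∀ y : V, F (c • y) = c * F y)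
    (y u v : V) :
    deriv (fun t : ℝ => gTensor F (y + t • y) u v) 0 = 0 := by
  have hev : (fun t : ℝ => gTensor F (y + t • y) u v)
      =ᶠ[nhds (0 : ℝ)] fun _ => gTensor F y u v := by
    filter_upwards [Ioi_mem_nhds (by norm_num : (-1 : ℝ) < 0)] with t ht
    have h1 : (0 : ℝ) < 1 + t := by simp only [Set.mem_Ioi] at ht; linarith
    have h2 : y + t • y = (1 + t) • y := by rw [add_smul, one_smul]
    rw [h2, gTensor_homog F homog h1]
  rw [hev.deriv_eq, deriv_const]

/-- If a Minkowski norm on `m` is both cyclic and naturally reductive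
with respect to the reductive decomposition `g = h ⊕ m`, then `[m,m] ⊆ h`,
i.e. the decomposition is a Cartan decomposition (the homogeneous space is symmetric). -/
theorem cyclic_naturally_reductive_implies_symmetric
    {g : Type*} [NormedAddCommGroup g] [NormedSpace ℝ g] [FiniteDimensional ℝ g]
    (L : g →ₗ[ℝ] g →ₗ[ℝ] g) (hL : IsLieBracket L)
    (h m : Submodule ℝ g) (hcompl : IsCompl h m)
    (hsubalg : ∀ x ∈ h, ∀ y ∈ h, L x y ∈ h)
    (hreduct : ∀ x ∈ h, ∀ y ∈ m, L x y ∈ m)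
    (F : m → ℝ) (hF : IsMinkowskiNorm F)
    (hcyclic : ∀ y : m, y ≠ 0 → ∀ x z : m,
      gTensor F y (projTo h m hcompl (L (x : g) (y : g))) z
        + gTensor F y (projTo h m hcompl (L (y : g) (z : g))) x
        + gTensor F y (projTo h m hcompl (L (z : g) (x : g))) y = 0)
    (hnatred : ∀ y : m, y ≠ 0 → ∀ x u v : m,
      gTensor F y (projTo h m hcompl (L (x : g) (u : g))) v
        + gTensor F y (projTo h m hcompl (L (x : g) (v : g))) u
        + 2 * cartanTensor F y (projTo h m hcompl (L (x : g) (y : g))) u v = 0) :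
    ∀ x y : m, L (x : g) (y : g) ∈ h := by
  -- antisymmetry of the bracket
  have hanti : ∀ a b : g, L a b = - L b a := by
    intro a b
    have h1 := hL.alternate (a + b)
    simp only [map_add, LinearMap.add_apply, hL.alternate a, hL.alternate b,
      zero_add, add_zero] at h1
    rw [add_comm] at h1
    exact eq_neg_of_add_eq_zero_left h1
  intro x y
  by_cases hy : (y : m) = 0
  · rw [hy]
    simp only [ZeroMemClass.coe_zero, map_zero]
    exact h.zero_mem
  · set P := projTo h m hcompl with hP
    -- negation rule for gTensor in the first slot
    have gneg : ∀ w z : m, gTensor F y (-w) z = - gTensor F y w z := by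
      intro w z
      rw [← neg_one_smul ℝ w, hF.g_smul_left y hy]
      ring
    -- Cartan tensor in direction y vanishes
    have hC : ∀ w u : m, cartanTensor F y w u y = 0 := by
      intro w u
      unfold cartanTensor
      rw [deriv_gTensor_ray F hF.homog]
      ring
    -- star identity from natural reductivity with v = y
    have star : ∀ a u : m, gTensor F y (P (L (a : g) (u : g))) y
        = - gTensor F y (P (L (a : g) (y : g))) u := by
      intro a u
      have hnr := hnatred y hy a u y
      rw [hC] at hnr
      linarith
    -- P of reversed brackets
    have hPneg : ∀ a b : m, P (L (a : g) (b : g)) = - P (L (b : g) (a : g)) := by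
      intro a b
      rw [hanti (a : g) (b : g), map_neg]
    -- the cyclic identity simplifies
    have hT : ∀ a b : m, gTensor F y (P (L (y : g) (a : g))) b
        = 2 * gTensor F y (P (L (y : g) (b : g))) a := by
      intro a b
      have hc1 := hcyclic y hy a b
      have h2 : gTensor F y (P (L (b : g) (a : g))) y
          = gTensor F y (P (L (y : g) (b : g))) a := by
        rw [star b a, hPneg b y, gneg]
        ring_nf
      have h3 : gTensor F y (P (L (a : g) (y : g))) b
          = - gTensor F y (P (L (y : g) (a : g))) b := by
        rw [hPneg a y, gneg]
      rw [h2, h3] at hc1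
      linarith
    have hTzero : ∀ a b : m, gTensor F y (P (L (y : g) (a : g))) b = 0 := by
      intro a b
      have h1 := hT a b
      have h2 := hT b a
      linarith
    have hzero : P (L (y : g) (x : g)) = 0 := by
      by_contra hne
      have := hF.g_posdef y hy _ hne
      rw [hTzero x (P (L (y : g) (x : g)))] at this
      exact lt_irrefl 0 this
    have : P (L (x : g) (y : g)) = 0 := by
      rw [hPneg x y, hzero, neg_zero]
    rw [hP, projTo] at this
    exact (Submodule.linearProjOfIsCompl_apply_eq_zero_iff hcompl.symm).mp this


end
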